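/- Let Q be symmetric positive definite, λ > 0, V an n×k matrix with Vᵀ Q V = I_k, and T = Bᵀ B for some (k+1)×k matrix B of full column rank. Set Ĥ = V T Vᵀ and Γ̂ = (λ² Q⁻¹ + Ĥ)⁻¹. Then for any vector c ∈ ℝⁿ of the form c = V Bᵀ β e₁ (with β ∈ ℝ and e₁ the first standard basis vector of ℝ^{k+1}), we have Γ̂ c = Q V (T + λ² I_k)⁻¹ Bᵀ β e₁. -/

import Mathlib

private lemma posDef_smul {m : ℕ} {A : Matrix (Fin m) (Fin m) ℝ} (hA : A.PosDef)
    {c : ℝ} (hc : 0 < c) : (c • A).PosDef := by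
  refine ⟨?_, fun x hx => ?_⟩
  · unfold Matrix.IsHermitian
    ext i j
    have := congrFun (congrFun hA.isHermitian.eq i) j
    simp [Matrix.conjTranspose_apply] at this ⊢
    exact Or.inl this
  · convert mul_pos hc (hA.2 hx) using 1
    simp only [Finsupp.mul_sum, Matrix.smul_apply, smul_eq_mul]
    exact Finsupp.sum_congr fun i _ => Finsupp.sum_congr fun j _ => by ring

private lemma transpose_mul_self_posSemidef {m p : ℕ} (A : Matrix (Fin m) (Fin p) ℝ) :
    (A.transpose * A).PosSemidef := by
  have := Matrix.posSemidef_conjTranspose_mul_self A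
  simpa [Matrix.conjTranspose_eq_transpose_of_trivial] using this

theorem stmt_18 {n k : ℕ} (Q : Matrix (Fin n) (Fin n) ℝ) (hQ : Q.PosDef)
    (l : ℝ) (hl : 0 < l)
    (V : Matrix (Fin n) (Fin k) ℝ) (hV : V.transpose * Q * V = 1)
    (B : Matrix (Fin (k + 1)) (Fin k) ℝ) (hB : B.rank = k)
    (T : Matrix (Fin k) (Fin k) ℝ) (hT : T = B.transpose * B)
    (Hhat : Matrix (Fin n) (Fin n) ℝ) (hHhat : Hhat = V * T * V.transpose)
    (Γhat : Matrix (Fin n) (Fin n) ℝ) (hΓhat : Γhat = (l ^ 2 • Q⁻¹ + Hhat)⁻¹)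
    (β : ℝ) (c : Fin n → ℝ)
    (hc : c = (V * B.transpose).mulVec (β • (Pi.single (0 : Fin (k + 1)) 1 : Fin (k + 1) → ℝ))) :
    Γhat.mulVec c =
      (Q * V * (T + l ^ 2 • (1 : Matrix (Fin k) (Fin k) ℝ))⁻¹ *
        B.transpose).mulVec (β • (Pi.single (0 : Fin (k + 1)) 1 : Fin (k + 1) → ℝ)) := by
  have hl2 : (0:ℝ) < l ^ 2 := by positivity
  -- positivity facts
  have hTpsd : T.PosSemidef := hT ▸ transpose_mul_self_posSemidef B
  have hHpsd : Hhat.PosSemidef := by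
    rw [hHhat, hT, show V * (B.transpose * B) * V.transpose
        = (B * V.transpose).transpose * (B * V.transpose) by
      simp [Matrix.transpose_mul, Matrix.mul_assoc]]
    exact transpose_mul_self_posSemidef _
  have hTl : (T + l ^ 2 • (1 : Matrix (Fin k) (Fin k) ℝ)).PosDef :=
    Matrix.PosDef.posSemidef_add hTpsd (posDef_smul Matrix.PosDef.one hl2)
  have hM : (l ^ 2 • Q⁻¹ + Hhat).PosDef :=
    (posDef_smul hQ.inv hl2).add_posSemidef hHpsd
  set M := l ^ 2 • Q⁻¹ + Hhat with hMdef
  have hdQ : IsUnit Q.det := isUnit_iff_ne_zero.mpr hQ.det_pos.ne'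
  have hdTl : IsUnit (T + l ^ 2 • (1 : Matrix (Fin k) (Fin k) ℝ)).det :=
    isUnit_iff_ne_zero.mpr hTl.det_pos.ne'
  have hdM : IsUnit M.det := isUnit_iff_ne_zero.mpr hM.det_pos.ne'
  have h1 : Q⁻¹ * Q = 1 := Q.nonsing_inv_mul hdQ
  have hV' : V.transpose * (Q * V) = 1 := by rw [← Matrix.mul_assoc, hV]
  -- key identity: M * Q * V = V * (T + l²I)
  have hMQV : M * Q * V = V * (T + l ^ 2 • (1 : Matrix (Fin k) (Fin k) ℝ)) := by
    simp only [hMdef, hHhat, Matrix.add_mul, Matrix.smul_mul, Matrix.mul_add,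
      Matrix.mul_smul, Matrix.mul_one, Matrix.mul_assoc,
      Matrix.nonsing_inv_mul_cancel_left _ _ hdQ, hV']
    abel
  have hkey : M * Q * V * (T + l ^ 2 • (1 : Matrix (Fin k) (Fin k) ℝ))⁻¹ = V := by
    rw [hMQV, Matrix.mul_nonsing_inv_cancel_right _ _ hdTl]
  have hmain : Γhat * (V * B.transpose) =
      Q * V * (T + l ^ 2 • (1 : Matrix (Fin k) (Fin k) ℝ))⁻¹ * B.transpose := by
    rw [hΓhat]
    conv_lhs => rw [← hkey]
    simp only [← Matrix.mul_assoc]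
    rw [Matrix.nonsing_inv_mul _ hdM, Matrix.one_mul]
  rw [hc, Matrix.mulVec_mulVec, hmain]
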